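/- arXiv:1707.06533 — 4 statements merged into one kernel-verified Lean document; each statement's English description precedes it below -/
import Mathlib

section
/- For any two distinct vertices (v_i, u_j) and (v_r, u_s) of the co-normal product G ⋆ H, their open neighborhoods are equal if and only if one of the following holds: (i) v_i = v_r in G and N(u_j) = N(u_s) in H; (ii) u_j = u_s in H and N(v_i) = N(v_r) in G; or (iii) N(v_i) = N(v_r) in G and N(u_j) = N(u_s) in H. -/
open SimpleGraph

/-- The co-normal product of two simple graphs. -/
def conormalProd {α β : Type*} (G : SimpleGraph α) (H : SimpleGraph β) :
    SimpleGraph (α × β) where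
  Adj x y := G.Adj x.1 y.1 ∨ H.Adj x.2 y.2
  symm := ⟨fun x y h => h.imp (fun a => a.symm) (fun a => a.symm)⟩
  loopless := ⟨fun x h => h.elim (G.loopless.irrefl x.1) (H.loopless.irrefl x.2)⟩

/-- The distinguishing number of a graph. -/
noncomputable def distinguishingNumber {α : Type*} (G : SimpleGraph α) : ℕ :=
  sInf {d | ∃ c : α → Fin d,
    ∀ φ : G ≃g G, (∀ v, c (φ v) = c v) → φ = SimpleGraph.Iso.refl}

/-- The distinguishing index of a graph. -/
noncomputable def distinguishingIndex {α : Type*} (G : SimpleGraph α) : ℕ :=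
  sInf {d | ∃ c : G.edgeSet → Fin d,
    ∀ φ : G ≃g G, (∀ e, c (φ.mapEdgeSet e) = c e) → φ = SimpleGraph.Iso.refl}

/-- A dominating vertex: adjacent to all other vertices. -/
def IsDominatingVertex {α : Type*} (G : SimpleGraph α) (v : α) : Prop :=
  ∀ w, w ≠ v → G.Adj v w

/-- Two vertices are false twins if they are distinct and have equal open neighborhoods. -/
def FalseTwins {α : Type*} (G : SimpleGraph α) (u v : α) : Prop :=
  u ≠ v ∧ G.neighborSet u = G.neighborSet v

/-- A graph is rigid if its only automorphism is the identity. -/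
def GraphRigid {α : Type*} (G : SimpleGraph α) : Prop :=
  ∀ φ : G ≃g G, φ = SimpleGraph.Iso.refl

theorem stmt2 {α β : Type*} (G : SimpleGraph α) (H : SimpleGraph β)
    (v r : α) (u s : β) (hne : (v, u) ≠ (r, s)) :
    (conormalProd G H).neighborSet (v, u) = (conormalProd G H).neighborSet (r, s) ↔
      (v = r ∧ H.neighborSet u = H.neighborSet s) ∨
      (u = s ∧ G.neighborSet v = G.neighborSet r) ∨
      (G.neighborSet v = G.neighborSet r ∧ H.neighborSet u = H.neighborSet s) := by
  constructor
  · intro h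
    have key : ∀ a b, (G.Adj v a ∨ H.Adj u b) ↔ (G.Adj r a ∨ H.Adj s b) := by
      intro a b
      have := Set.ext_iff.mp h (a, b)
      simpa [SimpleGraph.mem_neighborSet, conormalProd] using this
    have hrv : ¬ G.Adj r v := by
      intro hrv
      rcases (key v u).mpr (Or.inl hrv) with h' | h'
      · exact G.loopless.irrefl _ h'
      · exact H.loopless.irrefl _ h'
    have hsu : ¬ H.Adj s u := by
      intro hsu
      rcases (key v u).mpr (Or.inr hsu) with h' | h'
      · exact G.loopless.irrefl _ h'
      · exact H.loopless.irrefl _ h'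
    have hH : H.neighborSet u = H.neighborSet s := by
      ext b
      simpa [SimpleGraph.mem_neighborSet, hrv] using key v b
    have hG : G.neighborSet v = G.neighborSet r := by
      ext a
      simpa [SimpleGraph.mem_neighborSet, hsu] using key a u
    exact Or.inr (Or.inr ⟨hG, hH⟩)
  · rintro (⟨rfl, hH⟩ | ⟨rfl, hG⟩ | ⟨hG, hH⟩) <;> ext ⟨a, b⟩ <;>
      simp only [SimpleGraph.mem_neighborSet, conormalProd]
    · rw [Set.ext_iff] at hH
      have := hH b
      simp [SimpleGraph.mem_neighborSet] at this
      tauto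
    · rw [Set.ext_iff] at hG
      have := hG a
      simp [SimpleGraph.mem_neighborSet] at this
      tauto
    · rw [Set.ext_iff] at hG hH
      have h1 := hG a
      have h2 := hH b
      simp [SimpleGraph.mem_neighborSet] at h1 h2
      tauto
end

section
/- If graphs G and H have no false twins, then the co-normal product G ⋆ H has no false twins. -/
open SimpleGraph

theorem stmt4 {α β : Type*} (G : SimpleGraph α) (H : SimpleGraph β)
    (hG : ∀ u v : α, ¬ FalseTwins G u v) (hH : ∀ u v : β, ¬ FalseTwins H u v) :
    ∀ x y : α × β, ¬ FalseTwins (conormalProd G H) x y := by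
  rintro x y ⟨hxy, hN⟩
  have key : ∀ a b, (G.Adj x.1 a ∨ H.Adj x.2 b) ↔ (G.Adj y.1 a ∨ H.Adj y.2 b) := by
    intro a b
    simpa [SimpleGraph.mem_neighborSet, conormalProd] using Set.ext_iff.mp hN (a, b)
  have h1 : G.neighborSet x.1 = G.neighborSet y.1 := by
    ext a
    simp only [SimpleGraph.mem_neighborSet]
    constructor
    · intro h
      by_contra hna
      rcases (key a y.2).mp (Or.inl h) with h' | h'
      · exact hna h'
      · exact H.loopless.irrefl y.2 h'
    · intro h
      by_contra hna
      rcases (key a x.2).mpr (Or.inl h) with h' | h'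
      · exact hna h'
      · exact H.loopless.irrefl x.2 h'
  have h2 : H.neighborSet x.2 = H.neighborSet y.2 := by
    ext b
    simp only [SimpleGraph.mem_neighborSet]
    constructor
    · intro h
      by_contra hnb
      rcases (key y.1 b).mp (Or.inr h) with h' | h'
      · exact G.loopless.irrefl y.1 h'
      · exact hnb h'
    · intro h
      by_contra hnb
      rcases (key x.1 b).mpr (Or.inr h) with h' | h'
      · exact G.loopless.irrefl x.1 h'
      · exact hnb h'
  rcases em (x.1 = y.1) with h | h
  · exact hH x.2 y.2 ⟨fun he => hxy (Prod.ext h he), h2⟩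
  · exact hG x.1 y.1 ⟨h, h1⟩
end

section
/- For any two simple connected graphs G and H, the distinguishing number of the co-normal product satisfies D(G ⋆ H) ≤ min{D(G)·|V(H)|, |V(G)|·D(H)}. -/
open SimpleGraph

lemma exists_dist_coloring {α : Type*} [Fintype α] (G : SimpleGraph α) :
    ∃ c : α → Fin (distinguishingNumber G),
      ∀ φ : G ≃g G, (∀ v, c (φ v) = c v) → φ = SimpleGraph.Iso.refl := by
  have hne : (Fintype.card α) ∈ {d | ∃ c : α → Fin d,
      ∀ φ : G ≃g G, (∀ v, c (φ v) = c v) → φ = SimpleGraph.Iso.refl} := by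
    refine ⟨Fintype.equivFin α, fun φ h => ?_⟩
    have : ∀ v, φ v = v := fun v => (Fintype.equivFin α).injective (h v)
    exact DFunLike.ext _ _ this
  have := Nat.sInf_mem (Set.nonempty_of_mem hne)
  exact this

lemma conormal_le_left {α β : Type*} [Fintype α] [Fintype β]
    (G : SimpleGraph α) (H : SimpleGraph β) :
    distinguishingNumber (conormalProd G H) ≤ distinguishingNumber G * Fintype.card β := by
  obtain ⟨c, hc⟩ := exists_dist_coloring G
  apply Nat.sInf_le
  have e : (Fin (distinguishingNumber G) × β) ≃ Fin (distinguishingNumber G * Fintype.card β) :=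
    Fintype.equivFinOfCardEq (by simp)
  refine ⟨fun x => e (c x.1, x.2), fun φ h => ?_⟩
  have h' : ∀ x : α × β, (c (φ x).1, (φ x).2) = (c x.1, x.2) := fun x => e.injective (h x)
  have h2 : ∀ x : α × β, (φ x).2 = x.2 := fun x => (Prod.ext_iff.mp (h' x)).2
  have h1 : ∀ x : α × β, c (φ x).1 = c x.1 := fun x => (Prod.ext_iff.mp (h' x)).1
  have key : ∀ v : β, ∀ u : α, (φ (u, v)).1 = u := by
    intro v
    set f : α → α := fun u => (φ (u, v)).1 with hf
    have hφ : ∀ u : α, φ (u, v) = (f u, v) := by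
      intro u; exact Prod.ext rfl (h2 (u, v))
    have finj : Function.Injective f := by
      intro a b hab
      have : φ (a, v) = φ (b, v) := by rw [hφ, hφ, hab]
      exact (Prod.ext_iff.mp (φ.injective this)).1
    have fbij : Function.Bijective f := Finite.injective_iff_bijective.mp finj
    let eq : α ≃ α := Equiv.ofBijective f fbij
    have hmap : ∀ a b : α, G.Adj (f a) (f b) ↔ G.Adj a b := by
      intro a b
      have := φ.map_adj_iff (v := (a, v)) (w := (b, v))
      rw [hφ, hφ] at this
      simpa [conormalProd] using this
    let ψ : G ≃g G := ⟨eq, by intro a b; exact hmap a b⟩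
    have hψ : ψ = SimpleGraph.Iso.refl := by
      apply hc
      intro u
      have := h1 (u, v)
      simpa [ψ, eq, Equiv.ofBijective, hφ] using this
    intro u
    have : ψ u = u := by rw [hψ]; rfl
    simpa [ψ, eq, Equiv.ofBijective] using this
  apply DFunLike.ext
  intro x
  exact Prod.ext (key x.2 x.1) (h2 x)

lemma conormal_le_right {α β : Type*} [Fintype α] [Fintype β]
    (G : SimpleGraph α) (H : SimpleGraph β) :
    distinguishingNumber (conormalProd G H) ≤ Fintype.card α * distinguishingNumber H := by
  obtain ⟨c, hc⟩ := exists_dist_coloring H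
  apply Nat.sInf_le
  have e : (α × Fin (distinguishingNumber H)) ≃ Fin (Fintype.card α * distinguishingNumber H) :=
    Fintype.equivFinOfCardEq (by simp)
  refine ⟨fun x => e (x.1, c x.2), fun φ h => ?_⟩
  have h' : ∀ x : α × β, ((φ x).1, c (φ x).2) = (x.1, c x.2) := fun x => e.injective (h x)
  have h1 : ∀ x : α × β, (φ x).1 = x.1 := fun x => (Prod.ext_iff.mp (h' x)).1
  have h2 : ∀ x : α × β, c (φ x).2 = c x.2 := fun x => (Prod.ext_iff.mp (h' x)).2
  have key : ∀ u : α, ∀ v : β, (φ (u, v)).2 = v := by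
    intro u
    set f : β → β := fun v => (φ (u, v)).2 with hf
    have hφ : ∀ v : β, φ (u, v) = (u, f v) := by
      intro v; exact Prod.ext (h1 (u, v)) rfl
    have finj : Function.Injective f := by
      intro a b hab
      have : φ (u, a) = φ (u, b) := by rw [hφ, hφ, hab]
      exact (Prod.ext_iff.mp (φ.injective this)).2
    have fbij : Function.Bijective f := Finite.injective_iff_bijective.mp finj
    let eq : β ≃ β := Equiv.ofBijective f fbij
    have hmap : ∀ a b : β, H.Adj (f a) (f b) ↔ H.Adj a b := by
      intro a b
      have := φ.map_adj_iff (v := (u, a)) (w := (u, b))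
      rw [hφ, hφ] at this
      simpa [conormalProd] using this
    let ψ : H ≃g H := ⟨eq, by intro a b; exact hmap a b⟩
    have hψ : ψ = SimpleGraph.Iso.refl := by
      apply hc
      intro v
      have := h2 (u, v)
      simpa [ψ, eq, Equiv.ofBijective, hφ] using this
    intro v
    have : ψ v = v := by rw [hψ]; rfl
    simpa [ψ, eq, Equiv.ofBijective] using this
  apply DFunLike.ext
  intro x
  exact Prod.ext (h1 x) (key x.1 x.2)

theorem stmt7 {α β : Type*} [Fintype α] [Fintype β]
    (G : SimpleGraph α) (H : SimpleGraph β)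
    (hG : G.Connected) (hH : H.Connected) :
    distinguishingNumber (conormalProd G H) ≤
      min (distinguishingNumber G * Fintype.card β)
        (Fintype.card α * distinguishingNumber H) := by
  exact le_min (conormal_le_left G H) (conormal_le_right G H)
end

section
/- Let G be a connected graph of order n ≥ 2 and m ≥ 2. Then the distinguishing index of G ⋆ K_m equals 2, except that D'(K₂ ⋆ K₂) = 3. -/
open SimpleGraph

namespace Stmt17Aux

/-- The "red" relation on positions: a caterpillar (rigid tree). -/
def Rl (a b : ℕ) : Prop :=
  (1 ≤ a ∧ 1 ≤ b ∧ (a + 1 = b ∨ b + 1 = a)) ∨ (a = 0 ∧ (b = 2 ∨ b = 3)) ∨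
    (b = 0 ∧ (a = 2 ∨ a = 3))

instance : ∀ a b, Decidable (Rl a b) := fun a b => by unfold Rl; infer_instance

lemma Rl_symm (a b : ℕ) : Rl a b ↔ Rl b a := by unfold Rl; omega

lemma Rl0 (b : ℕ) : Rl 0 b ↔ b = 2 ∨ b = 3 := by unfold Rl; omega
lemma Rl1 (b : ℕ) : Rl 1 b ↔ b = 2 := by unfold Rl; omega
lemma Rl2 (b : ℕ) : Rl 2 b ↔ b = 0 ∨ b = 1 ∨ b = 3 := by unfold Rl; omega
lemma Rl3 (b : ℕ) : Rl 3 b ↔ b = 0 ∨ b = 2 ∨ b = 4 := by unfold Rl; omega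
lemma Rlmid (a b : ℕ) (ha : 4 ≤ a) : Rl a b ↔ b = a - 1 ∨ b = a + 1 := by unfold Rl; omega

variable {N : ℕ}

/-- red-degree of a position -/
def degR (i : Fin N) : ℕ := (Finset.univ.filter fun j : Fin N => Rl i.val j.val).card

lemma filter_eq_pair (p : Fin N → Prop) [DecidablePred p] (x y : Fin N) (hxy : x ≠ y)
    (h : ∀ j, p j ↔ j = x ∨ j = y) : (Finset.univ.filter p).card = 2 := by
  have : (Finset.univ.filter p) = {x, y} := by
    ext j; simp [h j]
  rw [this, Finset.card_pair hxy]

lemma filter_eq_single (p : Fin N → Prop) [DecidablePred p] (x : Fin N)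
    (h : ∀ j, p j ↔ j = x) : (Finset.univ.filter p).card = 1 := by
  have : (Finset.univ.filter p) = {x} := by ext j; simp [h j]
  rw [this, Finset.card_singleton]

lemma filter_eq_triple (p : Fin N → Prop) [DecidablePred p] (x y z : Fin N)
    (hxy : x ≠ y) (hxz : x ≠ z) (hyz : y ≠ z)
    (h : ∀ j, p j ↔ j = x ∨ j = y ∨ j = z) : (Finset.univ.filter p).card = 3 := by
  have : (Finset.univ.filter p) = {x, y, z} := by ext j; simp [h j]
  rw [this]
  rw [Finset.card_insert_of_notMem (by simp [hxy, hxz]), Finset.card_pair hyz]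

lemma deg0 (hN : 6 ≤ N) (i : Fin N) (hi : i.val = 0) : degR i = 2 := by
  apply filter_eq_pair _ (⟨2, by omega⟩ : Fin N) ⟨3, by omega⟩ (by simp [Fin.ext_iff])
  intro j; rw [hi, Rl0]; simp [Fin.ext_iff]

lemma deg1 (hN : 6 ≤ N) (i : Fin N) (hi : i.val = 1) : degR i = 1 := by
  apply filter_eq_single _ (⟨2, by omega⟩ : Fin N)
  intro j; rw [hi, Rl1]; simp [Fin.ext_iff]

lemma deg2 (hN : 6 ≤ N) (i : Fin N) (hi : i.val = 2) : degR i = 3 := by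
  apply filter_eq_triple _ (⟨0, by omega⟩ : Fin N) ⟨1, by omega⟩ ⟨3, by omega⟩
    (by simp [Fin.ext_iff]) (by simp [Fin.ext_iff]) (by simp [Fin.ext_iff])
  intro j; rw [hi, Rl2]; simp [Fin.ext_iff]

lemma deg3 (hN : 6 ≤ N) (i : Fin N) (hi : i.val = 3) : degR i = 3 := by
  apply filter_eq_triple _ (⟨0, by omega⟩ : Fin N) ⟨2, by omega⟩ ⟨4, by omega⟩
    (by simp [Fin.ext_iff]) (by simp [Fin.ext_iff]) (by simp [Fin.ext_iff])
  intro j; rw [hi, Rl3]; simp [Fin.ext_iff]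

lemma degmid (hN : 6 ≤ N) (i : Fin N) (hi : 4 ≤ i.val) (hi2 : i.val ≤ N - 2) :
    degR i = 2 := by
  apply filter_eq_pair _ (⟨i.val - 1, by omega⟩ : Fin N) ⟨i.val + 1, by omega⟩
    (by simp [Fin.ext_iff])
  intro j; rw [Rlmid _ _ hi]; simp [Fin.ext_iff]

lemma deglast (hN : 6 ≤ N) (i : Fin N) (hi : i.val = N - 1) : degR i = 1 := by
  apply filter_eq_single _ (⟨N - 2, by omega⟩ : Fin N)
  intro j; rw [hi, Rlmid _ _ (by omega)]
  simp only [Fin.ext_iff]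
  have := j.isLt
  omega

lemma deg_eq_three (hN : 6 ≤ N) (i : Fin N) (h : degR i = 3) :
    i.val = 2 ∨ i.val = 3 := by
  have hlt := i.isLt
  rcases (by omega : i.val = 0 ∨ i.val = 1 ∨ i.val = 2 ∨ i.val = 3 ∨
    (4 ≤ i.val ∧ i.val ≤ N - 2) ∨ i.val = N - 1) with h0 | h0 | h0 | h0 | ⟨h0, h1⟩ | h0
  · rw [deg0 hN i h0] at h; omega
  · rw [deg1 hN i h0] at h; omega
  · exact Or.inl h0
  · exact Or.inr h0
  · rw [degmid hN i h0 h1] at h; omega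
  · rw [deglast hN i h0] at h; omega

lemma deg_eq_one (hN : 6 ≤ N) (i : Fin N) (h : degR i = 1) :
    i.val = 1 ∨ i.val = N - 1 := by
  have hlt := i.isLt
  rcases (by omega : i.val = 0 ∨ i.val = 1 ∨ i.val = 2 ∨ i.val = 3 ∨
    (4 ≤ i.val ∧ i.val ≤ N - 2) ∨ i.val = N - 1) with h0 | h0 | h0 | h0 | ⟨h0, h1⟩ | h0
  · rw [deg0 hN i h0] at h; omega
  · exact Or.inl h0
  · rw [deg2 hN i h0] at h; omega
  · rw [deg3 hN i h0] at h; omega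
  · rw [degmid hN i h0 h1] at h; omega
  · exact Or.inr h0

lemma deg_eq_two (hN : 6 ≤ N) (i : Fin N) (h : degR i = 2) :
    i.val = 0 ∨ (4 ≤ i.val ∧ i.val ≤ N - 2) := by
  have hlt := i.isLt
  rcases (by omega : i.val = 0 ∨ i.val = 1 ∨ i.val = 2 ∨ i.val = 3 ∨
    (4 ≤ i.val ∧ i.val ≤ N - 2) ∨ i.val = N - 1) with h0 | h0 | h0 | h0 | ⟨h0, h1⟩ | h0
  · exact Or.inl h0
  · rw [deg1 hN i h0] at h; omega
  · rw [deg2 hN i h0] at h; omega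
  · rw [deg3 hN i h0] at h; omega
  · exact Or.inr ⟨h0, h1⟩
  · rw [deglast hN i h0] at h; omega

lemma degR_sigma (σ : Equiv.Perm (Fin N))
    (hσ : ∀ i j : Fin N, Rl i.val j.val ↔ Rl (σ i).val (σ j).val) (i : Fin N) :
    degR (σ i) = degR i := by
  have himg : (Finset.univ.filter fun j : Fin N => Rl (σ i).val j.val) =
      (Finset.univ.filter fun j : Fin N => Rl i.val j.val).image σ := by
    ext j
    simp only [Finset.mem_image, Finset.mem_filter, Finset.mem_univ, true_and]
    constructor
    · intro h
      refine ⟨σ.symm j, ?_, σ.apply_symm_apply j⟩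
      have := hσ i (σ.symm j)
      rw [σ.apply_symm_apply] at this
      exact this.2 h
    · rintro ⟨k, hk, rfl⟩
      exact (hσ i k).1 hk
  rw [degR, himg, Finset.card_image_of_injective _ σ.injective]; rfl


lemma rigid (hN : 6 ≤ N) (σ : Equiv.Perm (Fin N))
    (hσ : ∀ i j : Fin N, Rl i.val j.val ↔ Rl (σ i).val (σ j).val) : σ = 1 := by
  have hdeg := degR_sigma σ hσ
  have hinj := σ.injective
  set c0 : Fin N := ⟨0, by omega⟩
  set c1 : Fin N := ⟨1, by omega⟩
  set c2 : Fin N := ⟨2, by omega⟩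
  set c3 : Fin N := ⟨3, by omega⟩
  -- σ c2 = c2
  have hd2 : degR (σ c2) = 3 := by rw [hdeg c2]; exact deg2 hN c2 rfl
  have hσ2' : (σ c2).val = 2 ∨ (σ c2).val = 3 := deg_eq_three hN _ hd2
  have hR21 : Rl (c2 : Fin N).val (c1 : Fin N).val := by rw [Rl2]; simp [c1, c2]
  have hR21' : Rl (σ c2).val (σ c1).val := (hσ c2 c1).1 hR21
  have hd1 : degR (σ c1) = 1 := by rw [hdeg c1]; exact deg1 hN c1 rfl
  have hσ1' : (σ c1).val = 1 ∨ (σ c1).val = N - 1 := deg_eq_one hN _ hd1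
  have hσ2 : σ c2 = c2 := by
    rcases hσ2' with h | h
    · exact Fin.ext h
    · exfalso
      rw [h, Rl3] at hR21'
      omega
  have hσ3 : σ c3 = c3 := by
    have hd3 : degR (σ c3) = 3 := by rw [hdeg c3]; exact deg3 hN c3 rfl
    rcases deg_eq_three hN _ hd3 with h | h
    · exfalso
      have : σ c3 = σ c2 := by rw [hσ2]; exact Fin.ext h
      have := hinj this
      simp [c2, c3, Fin.ext_iff] at this
    · exact Fin.ext h
  have hσ1 : σ c1 = c1 := by
    rw [hσ2] at hR21'
    rw [show (c2 : Fin N).val = 2 from rfl, Rl2] at hR21'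
    rcases hσ1' with h | h
    · exact Fin.ext h
    · exfalso; omega
  have hσ0 : σ c0 = c0 := by
    have hR20 : Rl (c2 : Fin N).val (c0 : Fin N).val := by rw [Rl2]; simp [c0, c2]
    have hR20' := (hσ c2 c0).1 hR20
    rw [hσ2] at hR20'
    rw [show (c2 : Fin N).val = 2 from rfl, Rl2] at hR20'
    have hd0 : degR (σ c0) = 2 := by rw [hdeg c0]; exact deg0 hN c0 rfl
    rcases deg_eq_two hN _ hd0 with h | ⟨h, h'⟩
    · exact Fin.ext h
    · exfalso; omega
  -- induction for k ≥ 4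
  have key : ∀ k, ∀ hk : k < N, σ ⟨k, hk⟩ = ⟨k, hk⟩ := by
    intro k
    induction k using Nat.strong_induction_on with
    | _ k ih =>
      intro hk
      rcases (by omega : k = 0 ∨ k = 1 ∨ k = 2 ∨ k = 3 ∨ 4 ≤ k) with rfl | rfl | rfl | rfl | h4
      · exact hσ0
      · exact hσ1
      · exact hσ2
      · exact hσ3
      · have hk1 : k - 1 < N := by omega
        have ihk1 : σ ⟨k - 1, hk1⟩ = ⟨k - 1, hk1⟩ := ih (k - 1) (by omega) hk1
        have hch : Rl (k - 1) k := by unfold Rl; omega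
        have hch' : Rl ((σ ⟨k - 1, hk1⟩) : Fin N).val ((σ ⟨k, hk⟩) : Fin N).val :=
          (hσ ⟨k - 1, hk1⟩ ⟨k, hk⟩).1 hch
        rw [ihk1] at hch'
        by_cases h5 : k = 4
        · subst h5
          rw [show ((⟨4 - 1, hk1⟩ : Fin N)).val = 3 from rfl, Rl3] at hch'
          have hne0 : σ ⟨4, hk⟩ ≠ c0 := by
            rw [← hσ0]; intro h; have := hinj h; simp [c0, Fin.ext_iff] at this
          have hne2 : σ ⟨4, hk⟩ ≠ c2 := by
            rw [← hσ2]; intro h; have := hinj h; simp [c2, Fin.ext_iff] at this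
          apply Fin.ext
          rcases hch' with h | h | h
          · exfalso; exact hne0 (Fin.ext h)
          · exfalso; exact hne2 (Fin.ext h)
          · exact h
        · have h5' : 4 ≤ k - 1 := by omega
          rw [Rlmid _ _ h5'] at hch'
          have hk2 : k - 2 < N := by omega
          have ihk2 : σ ⟨k - 2, hk2⟩ = ⟨k - 2, hk2⟩ := ih (k - 2) (by omega) hk2
          have hne : (σ ⟨k, hk⟩).val ≠ k - 2 := by
            intro h
            have : σ ⟨k, hk⟩ = σ ⟨k - 2, hk2⟩ := by rw [ihk2]; exact Fin.ext h
            have := hinj this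
            simp only [Fin.ext_iff, Fin.val_mk] at this
            omega
          apply Fin.ext
          simp only [Fin.val_mk]
          omega
  apply Equiv.ext
  intro i
  have := key i.val i.isLt
  simpa using this



open SimpleGraph

section Main

variable {α : Type*} [Fintype α] {m : ℕ}

/-- position of a vertex -/
def pos (a : α ≃ Fin (Fintype.card α)) (u : α × Fin m) : ℕ :=
  (a u.1).val * m + u.2.val

lemma pos_mod (a : α ≃ Fin (Fintype.card α)) (u : α × Fin m) (hm : 2 ≤ m) :
    pos a u % m = u.2.val := by
  rw [pos, Nat.mul_comm, Nat.mul_add_mod, Nat.mod_eq_of_lt u.2.isLt]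

lemma chain_ne (a : α ≃ Fin (Fintype.card α)) (hm : 2 ≤ m) (u v : α × Fin m)
    (h : pos a u + 1 = pos a v) : u.2 ≠ v.2 := by
  intro hj
  have hj' : u.2.val = v.2.val := congrArg Fin.val hj
  unfold pos at h
  have h2 : (a u.1).val * m + 1 = (a v.1).val * m := by omega
  have h3 : ((a u.1).val * m + 1) % m = 1 % m := by rw [Nat.mul_comm]; exact Nat.mul_add_mod _ _ _
  have h4 : ((a v.1).val * m) % m = 0 := Nat.mul_mod_left _ _
  rw [h2, h4] at h3
  rw [Nat.mod_eq_of_lt (by omega)] at h3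
  exact absurd h3.symm one_ne_zero

lemma first_le_one (a : α ≃ Fin (Fintype.card α)) (hm : 2 ≤ m) (v : α × Fin m)
    (h : pos a v ≤ 3) : (a v.1).val ≤ 1 := by
  by_contra hc
  push_neg at hc
  have : 2 * m ≤ (a v.1).val * m := Nat.mul_le_mul_right m hc
  unfold pos at h
  omega

lemma first_eq_zero (a : α ≃ Fin (Fintype.card α)) (hm : 2 ≤ m) (v : α × Fin m)
    (h : (a v.1).val = 0) : pos a v = v.2.val := by
  unfold pos; rw [h, Nat.zero_mul, Nat.zero_add]

lemma first_eq_one (a : α ≃ Fin (Fintype.card α)) (hm : 2 ≤ m) (v : α × Fin m)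
    (h : (a v.1).val = 1) : pos a v = m + v.2.val := by
  unfold pos; rw [h, Nat.one_mul]

/-- realization: red pairs are edges of the co-normal product. -/
lemma realization (G : SimpleGraph α) (a : α ≃ Fin (Fintype.card α)) (hm : 2 ≤ m)
    (x₀ x₁ : α) (ha0 : (a x₀).val = 0) (ha1 : (a x₁).val = 1) (hadj : G.Adj x₀ x₁)
    (u v : α × Fin m) (h : Rl (pos a u) (pos a v)) :
    (conormalProd G (⊤ : SimpleGraph (Fin m))).Adj u v := by
  have hlayer : ∀ u v : α × Fin m, u.2 ≠ v.2 →
      (conormalProd G (⊤ : SimpleGraph (Fin m))).Adj u v := by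
    intro u v h
    exact Or.inr ((top_adj _ _).2 h)
  have hval : ∀ w : α × Fin m, (a w.1).val = 0 → w.1 = x₀ := by
    intro w hw
    apply a.injective
    apply Fin.ext
    rw [hw, ha0]
  have hval1 : ∀ w : α × Fin m, (a w.1).val = 1 → w.1 = x₁ := by
    intro w hw
    apply a.injective
    apply Fin.ext
    rw [hw, ha1]
  -- case: special pair from 0 to 2 or 3
  have hspecial : ∀ u v : α × Fin m, pos a u = 0 → (pos a v = 2 ∨ pos a v = 3) →
      (conormalProd G (⊤ : SimpleGraph (Fin m))).Adj u v := by
    intro u v hu hv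
    have hu1 : (a u.1).val = 0 ∧ u.2.val = 0 := by
      unfold pos at hu
      constructor
      · rcases Nat.mul_eq_zero.mp (by omega : (a u.1).val * m = 0) with h | h
        · exact h
        · omega
      · omega
    have hv3 : pos a v ≤ 3 := by omega
    have hle := first_le_one a hm v hv3
    rcases (by omega : (a v.1).val = 0 ∨ (a v.1).val = 1) with h0 | h1
    · -- v in first column, layer 2 or 3 ≠ 0
      have := first_eq_zero a hm v h0
      apply hlayer
      intro hj
      have := congrArg Fin.val hj
      omega
    · have hme := first_eq_one a hm v h1
      -- m + v.2.val = 2 or 3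
      by_cases hj : v.2.val = 0
      · -- same layer 0: need the G-edge
        left
        rw [hval u hu1.1, hval1 v h1]
        exact hadj
      · apply hlayer
        intro hjj
        have := congrArg Fin.val hjj
        omega
  -- main case split on Rl
  rcases h with ⟨h1, h2, h3 | h3⟩ | ⟨h1, h2⟩ | ⟨h1, h2⟩
  · exact hlayer u v (chain_ne a hm u v h3)
  · exact (hlayer v u (chain_ne a hm v u h3)).symm
  · exact hspecial u v h1 h2
  · exact (hspecial v u h1 h2).symm

lemma pos_lt (a : α ≃ Fin (Fintype.card α)) (u : α × Fin m) :
    pos a u < Fintype.card α * m := by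
  have h1 : (a u.1).val + 1 ≤ Fintype.card α := (a u.1).isLt
  have h2 : ((a u.1).val + 1) * m ≤ Fintype.card α * m := Nat.mul_le_mul_right m h1
  have h3 : ((a u.1).val + 1) * m = (a u.1).val * m + m := by ring
  have h4 := u.2.isLt
  unfold pos
  omega

/-- the position map as an equivalence -/
noncomputable def qEquiv (a : α ≃ Fin (Fintype.card α)) (hm : 2 ≤ m) :
    (α × Fin m) ≃ Fin (Fintype.card α * m) := by
  apply Equiv.ofBijective (fun u => (⟨pos a u, pos_lt a u⟩ : Fin (Fintype.card α * m)))
  rw [Fintype.bijective_iff_injective_and_card]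
  constructor
  · intro u v huv
    have hp : pos a u = pos a v := congrArg Fin.val huv
    have hj : u.2.val = v.2.val := by
      rw [← pos_mod a u hm, ← pos_mod a v hm, hp]
    have hx : (a u.1).val * m = (a v.1).val * m := by unfold pos at hp; omega
    have hx2 : (a u.1).val = (a v.1).val := Nat.eq_of_mul_eq_mul_right (by omega) hx
    have : u.1 = v.1 := a.injective (Fin.ext hx2)
    exact Prod.ext this (Fin.ext hj)
  · simp [Fintype.card_prod]

lemma qEquiv_val (a : α ≃ Fin (Fintype.card α)) (hm : 2 ≤ m) (u : α × Fin m) :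
    (qEquiv a hm u).val = pos a u := rfl

/-- the red predicate on unordered pairs -/
def redP (a : α ≃ Fin (Fintype.card α)) : Sym2 (α × Fin m) → Bool :=
  Sym2.lift ⟨fun u v => decide (Rl (pos a u) (pos a v)),
    fun u v => decide_eq_decide.mpr (Rl_symm _ _)⟩

lemma redP_mk (a : α ≃ Fin (Fintype.card α)) (u v : α × Fin m) :
    redP a s(u, v) = decide (Rl (pos a u) (pos a v)) := Sym2.lift_mk _ _ _

lemma two_mem (G : SimpleGraph α) (hm : 2 ≤ m) (hN6 : 6 ≤ Fintype.card α * m)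
    (x₀ x₁ : α) (hadj : G.Adj x₀ x₁) :
    ∃ c : (conormalProd G (⊤ : SimpleGraph (Fin m))).edgeSet → Fin 2,
      ∀ φ : (conormalProd G (⊤ : SimpleGraph (Fin m))) ≃g
          (conormalProd G (⊤ : SimpleGraph (Fin m))),
        (∀ e, c (φ.mapEdgeSet e) = c e) → φ = Iso.refl := by
  -- build the enumeration starting at the edge x₀x₁
  have hcard : 1 < Fintype.card α :=
    Fintype.one_lt_card_iff.mpr ⟨x₀, x₁, G.ne_of_adj hadj⟩
  have h0n : 0 < Fintype.card α := by omega
  have h1n : 1 < Fintype.card α := hcard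
  let e0 : α ≃ Fin (Fintype.card α) := Fintype.equivFin α
  let a1 : α ≃ Fin (Fintype.card α) := e0.trans (Equiv.swap (e0 x₀) ⟨0, h0n⟩)
  have ha1x0 : a1 x₀ = ⟨0, h0n⟩ := by
    simp [a1, Equiv.swap_apply_left]
  let a : α ≃ Fin (Fintype.card α) := a1.trans (Equiv.swap (a1 x₁) ⟨1, h1n⟩)
  have hax1 : (a x₁).val = 1 := by
    simp [a, Equiv.swap_apply_left]
  have hax0 : (a x₀).val = 0 := by
    have hne1 : a1 x₀ ≠ a1 x₁ := fun h => (G.ne_of_adj hadj) (a1.injective h)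
    have hne2 : a1 x₀ ≠ ⟨1, h1n⟩ := by rw [ha1x0]; simp [Fin.ext_iff]
    simp only [a, Equiv.trans_apply]
    rw [Equiv.swap_apply_of_ne_of_ne hne1 hne2, ha1x0]
  -- the coloring
  let H := conormalProd G (⊤ : SimpleGraph (Fin m))
  let c : H.edgeSet → Fin 2 := fun e => if redP a e.val then 1 else 0
  refine ⟨c, fun φ hφ => ?_⟩
  -- transfer to a permutation of positions
  let q := qEquiv a hm
  let σ : Equiv.Perm (Fin (Fintype.card α * m)) := q.symm.trans (φ.toEquiv.trans q)
  have hσq : ∀ u, σ (q u) = q (φ u) := by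
    intro u
    simp [σ, q, Equiv.trans_apply]
  -- color preservation on adjacent pairs
  have hpres : ∀ u v (h : H.Adj u v), redP a s(φ u, φ v) = redP a s(u, v) := by
    intro u v h
    have := hφ ⟨s(u, v), h⟩
    have hmap : (φ.mapEdgeSet ⟨s(u, v), h⟩).val = s(φ u, φ v) := by
      simp [Iso.mapEdgeSet_apply, Hom.mapEdgeSet, Sym2.map_pair_eq]
    simp only [c] at this
    rw [hmap] at this
    by_cases h1 : redP a s(φ u, φ v) = true <;> by_cases h2 : redP a s(u, v) = true <;>
      simp [h1, h2] at this ⊢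
  have hσ : ∀ i j : Fin (Fintype.card α * m),
      Rl i.val j.val ↔ Rl (σ i).val (σ j).val := by
    intro i j
    set u := q.symm i with hu
    set v := q.symm j with hv
    have hiu : i.val = pos a u := by rw [hu, ← qEquiv_val a hm, Equiv.apply_symm_apply]
    have hjv : j.val = pos a v := by rw [hv, ← qEquiv_val a hm, Equiv.apply_symm_apply]
    have hσi : (σ i).val = pos a (φ u) := by
      rw [← Equiv.apply_symm_apply q i, ← hu, hσq u, qEquiv_val]
    have hσj : (σ j).val = pos a (φ v) := by
      rw [← Equiv.apply_symm_apply q j, ← hv, hσq v, qEquiv_val]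
    rw [hiu, hjv, hσi, hσj]
    constructor
    · intro h
      have hedge : H.Adj u v := realization G a hm x₀ x₁ hax0 hax1 hadj u v h
      have := hpres u v hedge
      rw [redP_mk, redP_mk] at this
      rw [decide_eq_decide] at this
      exact this.mpr h
    · intro h
      have hedge' : H.Adj (φ u) (φ v) := realization G a hm x₀ x₁ hax0 hax1 hadj _ _ h
      have hedge : H.Adj u v := φ.map_adj_iff.mp hedge'
      have := hpres u v hedge
      rw [redP_mk, redP_mk] at this
      rw [decide_eq_decide] at this
      exact this.mp h
  have hσ1 : σ = 1 := rigid hN6 σ hσ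
  apply RelIso.ext
  intro v
  have h1 : σ (q v) = q v := by rw [hσ1]; rfl
  rw [hσq v] at h1
  exact q.injective h1

/-- the layer-swap nontrivial automorphism -/
def layerSwap (G : SimpleGraph α) (hm : 2 ≤ m) :
    (conormalProd G (⊤ : SimpleGraph (Fin m))) ≃g
      (conormalProd G (⊤ : SimpleGraph (Fin m))) where
  toEquiv := Equiv.prodCongr (Equiv.refl α) (Equiv.swap ⟨0, by omega⟩ ⟨1, by omega⟩)
  map_rel_iff' := by
    intro u v
    show (conormalProd G ⊤).Adj _ _ ↔ (conormalProd G ⊤).Adj u v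
    unfold conormalProd
    simp only [Equiv.prodCongr_apply, Equiv.coe_refl, Prod.map_fst, id_eq, Prod.map_snd,
      top_adj]
    rw [(Equiv.swap _ _).injective.ne_iff]

lemma layerSwap_ne_refl (G : SimpleGraph α) (hm : 2 ≤ m) (x : α) :
    layerSwap G hm ≠ (Iso.refl : (conormalProd G (⊤ : SimpleGraph (Fin m))) ≃g _) := by
  intro h
  have h1 := DFunLike.congr_fun h (x, ⟨0, by omega⟩)
  have h2 : ((layerSwap G hm) (x, (⟨0, by omega⟩ : Fin m))).2 = ⟨0, by omega⟩ := by
    rw [h1]; rfl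
  have h3 : ((layerSwap G hm) (x, (⟨0, by omega⟩ : Fin m))).2 = ⟨1, by omega⟩ := by
    show ((Equiv.prodCongr (Equiv.refl α)
      (Equiv.swap (⟨0, by omega⟩ : Fin m) ⟨1, by omega⟩)) (x, ⟨0, by omega⟩)).2 = _
    simp [Equiv.swap_apply_left]
  rw [h2] at h3
  simp [Fin.ext_iff] at h3

lemma sInf_eq_of (S : Set ℕ) (k : ℕ) (hk : k ∈ S) (hlb : ∀ d ∈ S, k ≤ d) :
    sInf S = k :=
  le_antisymm (Nat.sInf_le hk) (le_csInf ⟨k, hk⟩ hlb)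

lemma exists_adj (G : SimpleGraph α) (hG : G.Connected) (h1 : 1 < Fintype.card α) :
    ∃ x y, G.Adj x y := by
  obtain ⟨u, v, huv⟩ := Fintype.exists_pair_of_one_lt_card h1
  obtain ⟨w⟩ := hG.preconnected u v
  cases w with
  | nil => exact absurd rfl huv
  | cons h p => exact ⟨_, _, h⟩

section K4

variable (G : SimpleGraph α)

lemma complete_of_card_two (hG : G.Connected) (hα : Fintype.card α = 2) :
    ∀ x y : α, x ≠ y → G.Adj x y := by
  intro x y hxy
  obtain ⟨w⟩ := hG.preconnected x y
  cases w with
  | nil => exact absurd rfl hxy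
  | @cons _ c _ h p =>
    by_cases hcy : c = y
    · subst hcy; exact h
    · exfalso
      have : 2 < Fintype.card α := Fintype.two_lt_card_iff.mpr ⟨x, c, y, h.ne, hxy, hcy⟩
      omega

lemma H_complete (hG : G.Connected) (hα : Fintype.card α = 2) (hm : 2 ≤ m)
    (u v : α × Fin m) :
    (conormalProd G (⊤ : SimpleGraph (Fin m))).Adj u v ↔ u ≠ v := by
  constructor
  · exact fun h => (conormalProd G _).ne_of_adj h
  · intro h
    by_cases h1 : u.1 = v.1
    · have h2 : u.2 ≠ v.2 := fun h2 => h (Prod.ext h1 h2)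
      exact Or.inr ((top_adj _ _).2 h2)
    · exact Or.inl (complete_of_card_two G hG hα u.1 v.1 h1)

/-- the 3-coloring table for K4 -/
def t3 (a b : ℕ) : Fin 3 :=
  if a + b = 1 then 1 else if a + b = 2 then 2 else if a + b = 5 then 2 else 0

lemma t3_symm (a b : ℕ) : t3 a b = t3 b a := by unfold t3; rw [Nat.add_comm]

lemma t3_eq_one (a b : ℕ) : t3 a b = 1 ↔ a + b = 1 := by
  unfold t3; split_ifs <;> simp_all <;> decide

lemma t3_eq_two (a b : ℕ) : t3 a b = 2 ↔ (a + b = 2 ∨ a + b = 5) := by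
  unfold t3; split_ifs <;> simp_all <;> decide

variable {m : ℕ}

lemma three_mem (hG : G.Connected) (hα : Fintype.card α = 2) (hm2 : m = 2) :
    ∃ c : (conormalProd G (⊤ : SimpleGraph (Fin m))).edgeSet → Fin 3,
      ∀ φ : (conormalProd G (⊤ : SimpleGraph (Fin m))) ≃g
          (conormalProd G (⊤ : SimpleGraph (Fin m))),
        (∀ e, c (φ.mapEdgeSet e) = c e) → φ = Iso.refl := by
  have hm : 2 ≤ m := by omega
  have hcard : Fintype.card (α × Fin m) = 4 := by
    simp [Fintype.card_prod, hα, hm2]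
  let r : (α × Fin m) ≃ Fin 4 := Fintype.equivFinOfCardEq hcard
  let red3 : Sym2 (α × Fin m) → Fin 3 :=
    Sym2.lift ⟨fun u v => t3 (r u).val (r v).val, fun u v => t3_symm _ _⟩
  refine ⟨fun e => red3 e.val, fun φ hφ => ?_⟩
  -- preservation on distinct position pairs
  have hpres : ∀ i j : Fin 4, i ≠ j →
      t3 (r (φ (r.symm i))).val (r (φ (r.symm j))).val = t3 i.val j.val := by
    intro i j hij
    have hne : r.symm i ≠ r.symm j := fun h => hij (r.symm.injective h)
    have hadj : (conormalProd G (⊤ : SimpleGraph (Fin m))).Adj (r.symm i) (r.symm j) :=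
      (H_complete G hG hα hm _ _).2 hne
    have := hφ ⟨s(r.symm i, r.symm j), hadj⟩
    have hmap : (φ.mapEdgeSet ⟨s(r.symm i, r.symm j), hadj⟩).val
        = s(φ (r.symm i), φ (r.symm j)) := by
      simp [Iso.mapEdgeSet_apply, Hom.mapEdgeSet, Sym2.map_pair_eq]
    have h1 : red3 s(φ (r.symm i), φ (r.symm j)) = red3 s(r.symm i, r.symm j) := by
      have h2 : red3 (φ.mapEdgeSet ⟨s(r.symm i, r.symm j), hadj⟩).val
          = red3 s(r.symm i, r.symm j) := this
      rw [hmap] at h2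
      exact h2
    simp only [red3, Sym2.lift_mk] at h1
    rw [h1, Equiv.apply_symm_apply, Equiv.apply_symm_apply]
  -- derive that the induced permutation is the identity
  have hfix : ∀ i : Fin 4, r (φ (r.symm i)) = i := by
    have hinj : ∀ i j : Fin 4, i ≠ j → r (φ (r.symm i)) ≠ r (φ (r.symm j)) := by
      intro i j hij h
      exact hij (r.symm.injective (φ.injective (r.injective h)))
    have e01 := hpres 0 1 (by decide)
    have e02 := hpres 0 2 (by decide)
    have e23 := hpres 2 3 (by decide)
    set A := (r (φ (r.symm 0))).val with hA
    set B := (r (φ (r.symm 1))).val with hB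
    set C := (r (φ (r.symm 2))).val with hC
    set D := (r (φ (r.symm 3))).val with hD
    have hAB : A + B = 1 := by
      rw [← t3_eq_one]; rw [e01]; decide
    have hAC : A + C = 2 ∨ A + C = 5 := by
      rw [← t3_eq_two]; rw [e02]; decide
    have hCD : C + D = 2 ∨ C + D = 5 := by
      rw [← t3_eq_two]; rw [e23]; decide
    have hAlt : A < 4 := (r (φ (r.symm 0))).isLt
    have hBlt : B < 4 := (r (φ (r.symm 1))).isLt
    have hClt : C < 4 := (r (φ (r.symm 2))).isLt
    have hDlt : D < 4 := (r (φ (r.symm 3))).isLt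
    have hABne : A ≠ B := fun h => hinj 0 1 (by decide) (Fin.ext h)
    have hACne : A ≠ C := fun h => hinj 0 2 (by decide) (Fin.ext h)
    have hADne : A ≠ D := fun h => hinj 0 3 (by decide) (Fin.ext h)
    have hBCne : B ≠ C := fun h => hinj 1 2 (by decide) (Fin.ext h)
    have hBDne : B ≠ D := fun h => hinj 1 3 (by decide) (Fin.ext h)
    have hCDne : C ≠ D := fun h => hinj 2 3 (by decide) (Fin.ext h)
    have hAv : A = 0 ∧ B = 1 ∧ C = 2 ∧ D = 3 := by omega
    intro i
    have hex : i = 0 ∨ i = 1 ∨ i = 2 ∨ i = 3 := by omega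
    rcases hex with rfl | rfl | rfl | rfl
    · exact Fin.ext hAv.1
    · exact Fin.ext hAv.2.1
    · exact Fin.ext hAv.2.2.1
    · exact Fin.ext hAv.2.2.2
  apply RelIso.ext
  intro v
  have := hfix (r v)
  rw [Equiv.symm_apply_apply] at this
  exact r.injective this

/-- 2-coloring table on K4 -/
def tbl (b01 b02 b03 b12 b13 b23 : Bool) : Fin 4 → Fin 4 → Bool := fun i j =>
  if (i = 0 ∧ j = 1) ∨ (i = 1 ∧ j = 0) then b01
  else if (i = 0 ∧ j = 2) ∨ (i = 2 ∧ j = 0) then b02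
  else if (i = 0 ∧ j = 3) ∨ (i = 3 ∧ j = 0) then b03
  else if (i = 1 ∧ j = 2) ∨ (i = 2 ∧ j = 1) then b12
  else if (i = 1 ∧ j = 3) ∨ (i = 3 ∧ j = 1) then b13
  else if (i = 2 ∧ j = 3) ∨ (i = 3 ∧ j = 2) then b23
  else false

set_option maxHeartbeats 1000000 in
lemma K4lower : ∀ b01 b02 b03 b12 b13 b23 : Bool,
    ∃ σ : Equiv.Perm (Fin 4), (∃ v, σ v ≠ v) ∧
      ∀ i j, tbl b01 b02 b03 b12 b13 b23 (σ i) (σ j) =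
        tbl b01 b02 b03 b12 b13 b23 i j := by
  decide

lemma no_two_coloring (hG : G.Connected) (hα : Fintype.card α = 2) (hm2 : m = 2)
    (c : (conormalProd G (⊤ : SimpleGraph (Fin m))).edgeSet → Fin 2) :
    ∃ φ : (conormalProd G (⊤ : SimpleGraph (Fin m))) ≃g
        (conormalProd G (⊤ : SimpleGraph (Fin m))),
      (∀ e, c (φ.mapEdgeSet e) = c e) ∧ φ ≠ Iso.refl := by
  classical
  have hm : 2 ≤ m := by omega
  have hcard : Fintype.card (α × Fin m) = 4 := by
    simp [Fintype.card_prod, hα, hm2]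
  let H : SimpleGraph (α × Fin m) := conormalProd G (⊤ : SimpleGraph (Fin m))
  have hcompl : ∀ u v : α × Fin m, H.Adj u v ↔ u ≠ v := H_complete G hG hα hm
  let r : (α × Fin m) ≃ Fin 4 := Fintype.equivFinOfCardEq hcard
  -- the bool table of the coloring
  let fB : (α × Fin m) → (α × Fin m) → Bool := fun u v =>
    if h : H.Adj u v then decide (c ⟨s(u, v), h⟩ = 1) else false
  have fB_symm : ∀ u v, fB u v = fB v u := by
    intro u v
    simp only [fB]
    by_cases h : H.Adj u v
    · rw [dif_pos h, dif_pos h.symm]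
      congr 1
      have : (⟨s(u, v), h⟩ : H.edgeSet) = ⟨s(v, u), h.symm⟩ :=
        Subtype.ext (Sym2.eq_swap)
      rw [this]
    · rw [dif_neg h, dif_neg (fun h' => h h'.symm)]
  have fB_self : ∀ u, fB u u = false := by
    intro u
    simp only [fB]
    rw [dif_neg (H.loopless.irrefl u)]
  -- instantiate the decision lemma
  obtain ⟨σ, ⟨v₀, hv₀⟩, hpres⟩ := K4lower
    (fB (r.symm 0) (r.symm 1)) (fB (r.symm 0) (r.symm 2)) (fB (r.symm 0) (r.symm 3))
    (fB (r.symm 1) (r.symm 2)) (fB (r.symm 1) (r.symm 3)) (fB (r.symm 2) (r.symm 3))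
  set b01 := fB (r.symm 0) (r.symm 1)
  set b02 := fB (r.symm 0) (r.symm 2)
  set b03 := fB (r.symm 0) (r.symm 3)
  set b12 := fB (r.symm 1) (r.symm 2)
  set b13 := fB (r.symm 1) (r.symm 3)
  set b23 := fB (r.symm 2) (r.symm 3)
  have htbl : ∀ i j : Fin 4, tbl b01 b02 b03 b12 b13 b23 i j = fB (r.symm i) (r.symm j) := by
    intro i j
    fin_cases i <;> fin_cases j
    all_goals simp only [tbl]
    all_goals norm_num
    all_goals
      first
        | exact (fB_self _).symm
        | rfl
        | (rw [fB_symm]; try rfl)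
  -- build the automorphism
  let τ : (α × Fin m) ≃ (α × Fin m) := r.trans (σ.trans r.symm)
  let φ : H ≃g H :=
    { toEquiv := τ
      map_rel_iff' := by
        intro u v
        rw [hcompl, hcompl]
        exact τ.injective.ne_iff }
  have hφv : ∀ u, φ u = r.symm (σ (r u)) := fun u => rfl
  refine ⟨φ, ?_, ?_⟩
  · -- color preservation
    intro e
    obtain ⟨e, he⟩ := e
    revert he
    induction e using Sym2.ind with
    | _ u v =>
      intro he
      have he' : H.Adj u v := he
      have hmap : (φ.mapEdgeSet ⟨s(u, v), he⟩).val = s(φ u, φ v) := by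
        simp [Iso.mapEdgeSet_apply, Hom.mapEdgeSet, Sym2.map_pair_eq]
      have hadj' : H.Adj (φ u) (φ v) := φ.map_adj_iff.mpr he
      have hfB : fB (φ u) (φ v) = fB u v := by
        rw [hφv u, hφv v]
        have e1 : fB (r.symm (σ (r u))) (r.symm (σ (r v)))
            = tbl b01 b02 b03 b12 b13 b23 (σ (r u)) (σ (r v)) := (htbl _ _).symm
        have e2 : fB u v = tbl b01 b02 b03 b12 b13 b23 (r u) (r v) := by
          rw [htbl, Equiv.symm_apply_apply, Equiv.symm_apply_apply]
        rw [e1, hpres, e2]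
      simp only [fB] at hfB
      rw [dif_pos hadj', dif_pos he'] at hfB
      have hc : c ⟨s(φ u, φ v), hadj'⟩ = c ⟨s(u, v), he⟩ := by
        by_cases hx : c ⟨s(φ u, φ v), hadj'⟩ = 1 <;>
          by_cases hy : c ⟨s(u, v), he⟩ = 1
        · rw [hx, hy]
        · exact absurd hfB (by simp [hx, hy])
        · exact absurd hfB (by simp [hx, hy])
        · have h2 := (c ⟨s(φ u, φ v), hadj'⟩).isLt
          have h3 := (c ⟨s(u, v), he⟩).isLt
          apply Fin.ext
          rw [Fin.ext_iff] at hx hy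
          omega
      have hval : (φ.mapEdgeSet ⟨s(u, v), he⟩) = ⟨s(φ u, φ v), hadj'⟩ :=
        Subtype.ext hmap
      rw [hval]
      exact hc
  · -- nontrivial
    intro h
    have h1 := DFunLike.congr_fun h (r.symm v₀)
    rw [hφv] at h1
    rw [Equiv.apply_symm_apply] at h1
    have : σ v₀ = v₀ := by
      have := congrArg r h1
      rw [Equiv.apply_symm_apply] at this
      rw [this]
      exact (Equiv.apply_symm_apply r v₀)
    exact hv₀ this

end K4

end Main

end Stmt17Aux


open Stmt17Aux in
theorem stmt17 {α : Type*} [Fintype α] (G : SimpleGraph α) (hG : G.Connected)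
    (hn : 2 ≤ Fintype.card α) (m : ℕ) (hm : 2 ≤ m) :
    (¬ (Fintype.card α = 2 ∧ m = 2) →
      distinguishingIndex (conormalProd G (⊤ : SimpleGraph (Fin m))) = 2) ∧
    ((Fintype.card α = 2 ∧ m = 2) →
      distinguishingIndex (conormalProd G (⊤ : SimpleGraph (Fin m))) = 3) := by
  constructor
  · intro hexc
    unfold distinguishingIndex
    apply sInf_eq_of
    · obtain ⟨x₀, x₁, hadj⟩ := exists_adj G hG (by omega)
      have hN6 : 6 ≤ Fintype.card α * m := by
        rcases Nat.lt_or_ge m 3 with h | h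
        · have hm2 : m = 2 := by omega
          have hα : Fintype.card α ≠ 2 := fun h' => hexc ⟨h', hm2⟩
          have h3 : 3 ≤ Fintype.card α := by omega
          have := Nat.mul_le_mul h3 (show 2 ≤ m by omega)
          omega
        · have := Nat.mul_le_mul hn h
          omega
      exact two_mem G hm hN6 x₀ x₁ hadj
    · intro d hd
      by_contra hlt
      push_neg at hlt
      obtain ⟨c, hc⟩ := hd
      have heq : ∀ e, c ((layerSwap G hm).mapEdgeSet e) = c e := by
        intro e
        apply Fin.ext
        have h1 := (c ((layerSwap G hm).mapEdgeSet e)).isLt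
        have h2 := (c e).isLt
        omega
      have hrefl := hc (layerSwap G hm) heq
      have hx : Nonempty α := Fintype.card_pos_iff.mp (by omega)
      obtain ⟨x⟩ := hx
      exact layerSwap_ne_refl G hm x hrefl
  · rintro ⟨hα, hm2⟩
    unfold distinguishingIndex
    apply sInf_eq_of
    · exact three_mem G hG hα hm2
    · intro d hd
      by_contra hlt
      push_neg at hlt
      obtain ⟨c, hc⟩ := hd
      have hd2 : d ≤ 2 := by omega
      obtain ⟨φ, hpres, hne⟩ :=
        no_two_coloring G hG hα hm2 (fun e => Fin.castLE hd2 (c e))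
      apply hne
      apply hc φ
      intro e
      exact Fin.castLE_injective hd2 (hpres e)
end
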